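/- Let ρ ∈ Density(X⊗Y), let R_1,R_2,S_1,S_2 be reflections on X with S_1 and S_2 commuting, and let U_1, U_2 be reflections on Y. If R_1 and S_1 are each ε-consistent with U_1 on ρ, and R_2 and S_2 are each ε-consistent with U_2 on ρ, then Re Tr(R_1 R_2 R_1 R_2 ρ) ≥ 1 − O(ε). -/

import Mathlib

open Matrix Kronecker ComplexOrder

/-- Two reflections `R` on `X` and `U` on `Y` are ε-consistent on a state `ρ` of `X⊗Y`
if `(1 + Tr((R⊗U)ρ))/2 ≥ 1 − ε`. -/
def EpsConsistent {nx ny : ℕ} (ρ : Matrix (Fin nx × Fin ny) (Fin nx × Fin ny) ℂ)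
    (R : Matrix (Fin nx) (Fin nx) ℂ) (U : Matrix (Fin ny) (Fin ny) ℂ) (ε : ℝ) : Prop :=
  1 - ε ≤ (1 + (((R ⊗ₖ U) * ρ).trace).re) / 2

noncomputable def emb {m : Type*} [Fintype m] (A : Matrix m m ℂ) :
    EuclideanSpace ℂ (m × m) :=
  (WithLp.equiv 2 _).symm (fun p => A p.1 p.2)

lemma emb_add {m : Type*} [Fintype m] (A B : Matrix m m ℂ) :
    emb (A + B) = emb A + emb B := rfl

lemma inner_emb {m : Type*} [Fintype m] (A B : Matrix m m ℂ) :
    inner ℂ (emb A) (emb B) = (Aᴴ * B).trace := by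
  simp only [emb, PiLp.inner_apply, RCLike.inner_apply, WithLp.equiv_symm_apply, PiLp.toLp_apply,
    Matrix.trace, Matrix.diag, Matrix.mul_apply, Matrix.conjTranspose_apply,
    Fintype.sum_prod_type]
  rw [Finset.sum_comm]
  simp [mul_comm]

open scoped MatrixOrder in
noncomputable def Matrix.PosSemidef.sqrt {m : Type*} [Fintype m] [DecidableEq m]
    {A : Matrix m m ℂ} (_hA : A.PosSemidef) : Matrix m m ℂ := CFC.sqrt A

open scoped MatrixOrder in
lemma Matrix.PosSemidef.posSemidef_sqrt {m : Type*} [Fintype m] [DecidableEq m]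
    {A : Matrix m m ℂ} (hA : A.PosSemidef) : hA.sqrt.PosSemidef :=
  (CFC.sqrt_nonneg A).posSemidef

open scoped MatrixOrder in
lemma Matrix.PosSemidef.sqrt_mul_self {m : Type*} [Fintype m] [DecidableEq m]
    {A : Matrix m m ℂ} (hA : A.PosSemidef) : hA.sqrt * hA.sqrt = A :=
  CFC.sqrt_mul_sqrt_self A hA.nonneg

section Abstract

variable {m : Type*} [Fintype m] [DecidableEq m]
variable (ρ : Matrix m m ℂ) (hρ : ρ.PosSemidef)

/-- the seminorm `‖A √ρ‖`. -/
noncomputable def snorm (A : Matrix m m ℂ) : ℝ := ‖emb (A * hρ.sqrt)‖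

lemma snorm_nonneg (A : Matrix m m ℂ) : 0 ≤ snorm ρ hρ A := norm_nonneg _

lemma snorm_sq (A : Matrix m m ℂ) :
    (snorm ρ hρ A) ^ 2 = ((Aᴴ * A * ρ).trace).re := by
  have h1 : ((A * hρ.sqrt)ᴴ * (A * hρ.sqrt)).trace = (Aᴴ * A * ρ).trace := by
    rw [conjTranspose_mul, hρ.posSemidef_sqrt.isHermitian.eq]
    rw [show hρ.sqrt * Aᴴ * (A * hρ.sqrt) = hρ.sqrt * (Aᴴ * A * hρ.sqrt) by
      simp [mul_assoc]]
    rw [Matrix.trace_mul_comm, Matrix.mul_assoc, hρ.sqrt_mul_self]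
  have h2 := inner_self_eq_norm_sq (𝕜 := ℂ) (emb (A * hρ.sqrt))
  unfold snorm
  rw [← h2]
  rw [show (RCLike.re (inner ℂ (emb (A * hρ.sqrt)) (emb (A * hρ.sqrt))))
      = ((((A * hρ.sqrt)ᴴ * (A * hρ.sqrt)).trace)).re by rw [inner_emb]; rfl]
  rw [h1]

lemma snorm_triangle (A B C : Matrix m m ℂ) :
    snorm ρ hρ (A - C) ≤ snorm ρ hρ (A - B) + snorm ρ hρ (B - C) := by
  unfold snorm
  have : (A - C) * hρ.sqrt = (A - B) * hρ.sqrt + (B - C) * hρ.sqrt := by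
    rw [sub_mul, sub_mul, sub_mul]; abel
  rw [this, emb_add]
  exact norm_add_le _ _

lemma snorm_sub_symm (A B : Matrix m m ℂ) :
    snorm ρ hρ (A - B) = snorm ρ hρ (B - A) := by
  unfold snorm
  have : (A - B) * hρ.sqrt = -((B - A) * hρ.sqrt) := by
    rw [sub_mul, sub_mul]; abel
  rw [this, show emb (-((B - A) * hρ.sqrt)) = -emb ((B - A) * hρ.sqrt) from rfl,
    norm_neg]

lemma snorm_unitary_mul (W A : Matrix m m ℂ) (hW : Wᴴ * W = 1) :
    snorm ρ hρ (W * A) = snorm ρ hρ A := by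
  have h1 : (snorm ρ hρ (W * A)) ^ 2 = (snorm ρ hρ A) ^ 2 := by
    rw [snorm_sq, snorm_sq, conjTranspose_mul]
    rw [show Aᴴ * Wᴴ * (W * A) * ρ = Aᴴ * (Wᴴ * W) * A * ρ by simp [mul_assoc]]
    rw [hW, mul_one]
  have := snorm_nonneg ρ hρ (W * A)
  have := snorm_nonneg ρ hρ A
  nlinarith

end Abstract

theorem abstract_bound {m : Type*} [Fintype m] [DecidableEq m]
    (ρ : Matrix m m ℂ) (hρ : ρ.PosSemidef) (hTr : ρ.trace = 1) (ε : ℝ) (hε : 0 ≤ ε)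
    (a b a' b' u v : Matrix m m ℂ)
    (hah : aᴴ = a) (hbh : bᴴ = b) (ha'h : a'ᴴ = a') (hb'h : b'ᴴ = b')
    (huh : uᴴ = u) (hvh : vᴴ = v)
    (ha2 : a*a = 1) (hb2 : b*b = 1) (ha'2 : a'*a' = 1) (hb'2 : b'*b' = 1)
    (hu2 : u*u = 1) (hv2 : v*v = 1)
    (hau : a*u = u*a) (hav : a*v = v*a) (hbu : b*u = u*b) (hbv : b*v = v*b)
    (ha'u : a'*u = u*a') (ha'v : a'*v = v*a') (hb'u : b'*u = u*b') (hb'v : b'*v = v*b')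
    (ha'b' : a'*b' = b'*a')
    (hau_c : 1 - 2*ε ≤ ((a*u*ρ).trace).re)
    (ha'u_c : 1 - 2*ε ≤ ((a'*u*ρ).trace).re)
    (hbv_c : 1 - 2*ε ≤ ((b*v*ρ).trace).re)
    (hb'v_c : 1 - 2*ε ≤ ((b'*v*ρ).trace).re) :
    1 - 128*ε ≤ ((a*b*a*b*ρ).trace).re := by
  set t := Real.sqrt (4*ε) with ht
  have ht2 : t^2 = 4*ε := Real.sq_sqrt (by linarith)
  have htnn : 0 ≤ t := Real.sqrt_nonneg _
  -- generic distance bound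
  have dist : ∀ P Q : Matrix m m ℂ, Pᴴ = P → Qᴴ = Q → P*P = 1 → Q*Q = 1 →
      P*Q = Q*P → 1 - 2*ε ≤ ((P*Q*ρ).trace).re → snorm ρ hρ (P - Q) ≤ t := by
    intro P Q hP hQ hP2 hQ2 hPQ hc
    have hsq : snorm ρ hρ (P - Q)^2 ≤ 4*ε := by
      rw [snorm_sq]
      have key : (P - Q)ᴴ * (P - Q) * ρ = ρ + ρ - P*Q*ρ - Q*P*ρ := by
        rw [conjTranspose_sub, hP, hQ]
        simp only [sub_mul, mul_sub, hP2, hQ2, one_mul]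
        abel
      rw [key, ← hPQ]
      simp only [Matrix.trace_sub, Matrix.trace_add, hTr, Complex.sub_re,
        Complex.add_re, Complex.one_re]
      linarith
    have h0 := snorm_nonneg ρ hρ (P - Q)
    nlinarith
  have d1 : snorm ρ hρ (a - u) ≤ t := dist a u hah huh ha2 hu2 hau hau_c
  have d2 : snorm ρ hρ (a' - u) ≤ t := dist a' u ha'h huh ha'2 hu2 ha'u ha'u_c
  have d3 : snorm ρ hρ (b - v) ≤ t := dist b v hbh hvh hb2 hv2 hbv hbv_c
  have d4 : snorm ρ hρ (b' - v) ≤ t := dist b' v hb'h hvh hb'2 hv2 hb'v hb'v_c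
  -- helper : snorm (W*(X-Y)) = snorm (X-Y) for our reflections
  have unit : ∀ W : Matrix m m ℂ, Wᴴ = W → W*W = 1 → ∀ X Y : Matrix m m ℂ,
      snorm ρ hρ (W*X - W*Y) = snorm ρ hρ (X - Y) := by
    intro W hWh hW2 X Y
    rw [show W*X - W*Y = W*(X - Y) by rw [mul_sub]]
    exact snorm_unitary_mul ρ hρ W _ (by rw [hWh, hW2])
  -- step 1 : ‖ab - vu‖ ≤ 2t
  have s1 : snorm ρ hρ (a*b - v*u) ≤ 2*t := by
    have e1 : snorm ρ hρ (a*b - a*v) = snorm ρ hρ (b - v) := unit a hah ha2 b v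
    have e2 : snorm ρ hρ (a*v - v*u) = snorm ρ hρ (a - u) := by
      rw [hav]; exact unit v hvh hv2 a u
    calc snorm ρ hρ (a*b - v*u)
        ≤ snorm ρ hρ (a*b - a*v) + snorm ρ hρ (a*v - v*u) := snorm_triangle ρ hρ _ _ _
      _ ≤ 2*t := by rw [e1, e2]; linarith
  -- step 2 : ‖ba - uv‖ ≤ 2t
  have s2 : snorm ρ hρ (b*a - u*v) ≤ 2*t := by
    have e1 : snorm ρ hρ (b*a - b*u) = snorm ρ hρ (a - u) := unit b hbh hb2 a u
    have e2 : snorm ρ hρ (b*u - u*v) = snorm ρ hρ (b - v) := by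
      rw [hbu]; exact unit u huh hu2 b v
    calc snorm ρ hρ (b*a - u*v)
        ≤ snorm ρ hρ (b*a - b*u) + snorm ρ hρ (b*u - u*v) := snorm_triangle ρ hρ _ _ _
      _ ≤ 2*t := by rw [e1, e2]; linarith
  -- step 3 : ‖uv - vu‖ ≤ 4t
  have s3 : snorm ρ hρ (u*v - v*u) ≤ 4*t := by
    have e1 : snorm ρ hρ (u*v - u*b') = snorm ρ hρ (b' - v) := by
      rw [unit u huh hu2 v b']; exact snorm_sub_symm ρ hρ v b'
    have e2 : snorm ρ hρ (u*b' - a'*b') = snorm ρ hρ (a' - u) := by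
      rw [← hb'u, ha'b', show b'*u - b'*a' = b'*(u - a') by rw [mul_sub],
        snorm_unitary_mul ρ hρ b' _ (by rw [hb'h, hb'2])]
      exact snorm_sub_symm ρ hρ u a'
    have e3 : snorm ρ hρ (a'*b' - v*a') = snorm ρ hρ (b' - v) := by
      rw [← ha'v]; exact unit a' ha'h ha'2 b' v
    have e4 : snorm ρ hρ (v*a' - v*u) = snorm ρ hρ (a' - u) := unit v hvh hv2 a' u
    calc snorm ρ hρ (u*v - v*u)
        ≤ snorm ρ hρ (u*v - u*b') + snorm ρ hρ (u*b' - v*u) := snorm_triangle ρ hρ _ _ _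
      _ ≤ snorm ρ hρ (u*v - u*b') + (snorm ρ hρ (u*b' - a'*b')
            + snorm ρ hρ (a'*b' - v*u)) := by
          have := snorm_triangle ρ hρ (u*b') (a'*b') (v*u); linarith
      _ ≤ snorm ρ hρ (u*v - u*b') + (snorm ρ hρ (u*b' - a'*b')
            + (snorm ρ hρ (a'*b' - v*a') + snorm ρ hρ (v*a' - v*u))) := by
          have := snorm_triangle ρ hρ (a'*b') (v*a') (v*u); linarith
      _ ≤ 4*t := by rw [e1, e2, e3, e4]; linarith
  -- combine : ‖ab - ba‖ ≤ 8t
  have scomm : snorm ρ hρ (a*b - b*a) ≤ 8*t := by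
    have h1 := snorm_triangle ρ hρ (a*b) (v*u) (b*a)
    have h2 := snorm_triangle ρ hρ (v*u) (u*v) (b*a)
    have h3 : snorm ρ hρ (v*u - u*v) = snorm ρ hρ (u*v - v*u) := snorm_sub_symm ρ hρ _ _
    have h4 : snorm ρ hρ (u*v - b*a) = snorm ρ hρ (b*a - u*v) := snorm_sub_symm ρ hρ _ _
    linarith
  -- the exact identity
  have hx1 : b*a*(a*b) = 1 := by
    rw [mul_assoc b a (a*b), ← mul_assoc a a b, ha2, one_mul, hb2]
  have hx2 : a*b*(b*a) = 1 := by
    rw [mul_assoc a b (b*a), ← mul_assoc b b a, hb2, one_mul, ha2]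
  have key2 : (b*a - a*b) * (a*b - b*a) * ρ
      = ρ + ρ - a*b*(a*b)*ρ - b*a*(b*a)*ρ := by
    simp only [sub_mul, mul_sub, hx1, hx2, one_mul]
    abel
  have hct : (a*b - b*a)ᴴ = b*a - a*b := by
    simp [conjTranspose_sub, conjTranspose_mul, hah, hbh]
  have hH : (a*b*(a*b)*ρ)ᴴ = ρ * (b*a*(b*a)) := by
    simp [conjTranspose_mul, hah, hbh, hρ.isHermitian.eq, mul_assoc]
  have hre : ((b*a*(b*a)*ρ).trace).re = ((a*b*(a*b)*ρ).trace).re := by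
    have : (b*a*(b*a)*ρ).trace = star ((a*b*(a*b)*ρ).trace) := by
      rw [← Matrix.trace_conjTranspose, hH, Matrix.trace_mul_comm]
    rw [this]
    simp [Complex.star_def]
  have hfin : snorm ρ hρ (a*b - b*a)^2 = 2 - 2*((a*b*(a*b)*ρ).trace).re := by
    rw [snorm_sq, hct, key2]
    simp only [Matrix.trace_sub, Matrix.trace_add, hTr, Complex.sub_re,
      Complex.add_re, Complex.one_re, hre]
    ring
  have hgoal : a*b*a*b*ρ = a*b*(a*b)*ρ := by rw [mul_assoc (a*b) a b]
  rw [hgoal]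
  have hnn := snorm_nonneg ρ hρ (a*b - b*a)
  nlinarith [scomm, hfin, ht2, htnn, hnn]

lemma kron_conjT {p q : Type*} [Fintype p] [Fintype q]
    (A : Matrix p p ℂ) (B : Matrix q q ℂ) : (A ⊗ₖ B)ᴴ = Aᴴ ⊗ₖ Bᴴ := by
  ext ⟨i, j⟩ ⟨k, l⟩
  simp [conjTranspose_apply, kroneckerMap_apply, star_mul', mul_comm]

/-- If `S₁, S₂` commute, `R₁, S₁` are both ε-consistent with `U₁`, and `R₂, S₂` are
both ε-consistent with `U₂`, then `R₁` and `R₂` approximately commute on `ρ`: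
`Re Tr(R₁R₂R₁R₂ρ) ≥ 1 − O(ε)`. -/
theorem approximate_commutation :
    ∃ C : ℝ, 0 < C ∧
      ∀ (nx ny : ℕ) (ρ : Matrix (Fin nx × Fin ny) (Fin nx × Fin ny) ℂ)
        (R1 R2 S1 S2 : Matrix (Fin nx) (Fin nx) ℂ)
        (U1 U2 : Matrix (Fin ny) (Fin ny) ℂ) (ε : ℝ),
        ρ.PosSemidef → ρ.trace = 1 → 0 ≤ ε →
        (∀ A ∈ [R1, R2, S1, S2], A.IsHermitian ∧ A * A = (1 : Matrix (Fin nx) (Fin nx) ℂ)) →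
        (∀ A ∈ [U1, U2], A.IsHermitian ∧ A * A = (1 : Matrix (Fin ny) (Fin ny) ℂ)) →
        S1 * S2 = S2 * S1 →
        EpsConsistent ρ R1 U1 ε → EpsConsistent ρ S1 U1 ε →
        EpsConsistent ρ R2 U2 ε → EpsConsistent ρ S2 U2 ε →
        1 - C * ε ≤
          ((((R1 * R2 * R1 * R2) ⊗ₖ (1 : Matrix (Fin ny) (Fin ny) ℂ)) * ρ).trace).re := by
  refine ⟨128, by norm_num, ?_⟩
  intro nx ny ρ R1 R2 S1 S2 U1 U2 ε hρ hTr hε hX hY hS hc1 hc2 hc3 hc4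
  obtain ⟨hR1h, hR1sq⟩ := hX R1 (by simp)
  obtain ⟨hR2h, hR2sq⟩ := hX R2 (by simp)
  obtain ⟨hS1h, hS1sq⟩ := hX S1 (by simp)
  obtain ⟨hS2h, hS2sq⟩ := hX S2 (by simp)
  obtain ⟨hU1h, hU1sq⟩ := hY U1 (by simp)
  obtain ⟨hU2h, hU2sq⟩ := hY U2 (by simp)
  set a := R1 ⊗ₖ (1 : Matrix (Fin ny) (Fin ny) ℂ) with ha
  set b := R2 ⊗ₖ (1 : Matrix (Fin ny) (Fin ny) ℂ) with hb
  set a' := S1 ⊗ₖ (1 : Matrix (Fin ny) (Fin ny) ℂ) with ha'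
  set b' := S2 ⊗ₖ (1 : Matrix (Fin ny) (Fin ny) ℂ) with hb'
  set u := (1 : Matrix (Fin nx) (Fin nx) ℂ) ⊗ₖ U1 with hu
  set v := (1 : Matrix (Fin nx) (Fin nx) ℂ) ⊗ₖ U2 with hv
  have herm : ∀ (R : Matrix (Fin nx) (Fin nx) ℂ), R.IsHermitian →
      (R ⊗ₖ (1 : Matrix (Fin ny) (Fin ny) ℂ))ᴴ = R ⊗ₖ 1 := by
    intro R hR; rw [kron_conjT, hR.eq, conjTranspose_one]
  have hermY : ∀ (U : Matrix (Fin ny) (Fin ny) ℂ), U.IsHermitian →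
      ((1 : Matrix (Fin nx) (Fin nx) ℂ) ⊗ₖ U)ᴴ = 1 ⊗ₖ U := by
    intro U hU; rw [kron_conjT, hU.eq, conjTranspose_one]
  have sqX : ∀ (R : Matrix (Fin nx) (Fin nx) ℂ), R * R = 1 →
      (R ⊗ₖ (1 : Matrix (Fin ny) (Fin ny) ℂ)) * (R ⊗ₖ 1) = 1 := by
    intro R hR; rw [← mul_kronecker_mul, hR, one_mul, one_kronecker_one]
  have sqY : ∀ (U : Matrix (Fin ny) (Fin ny) ℂ), U * U = 1 →
      ((1 : Matrix (Fin nx) (Fin nx) ℂ) ⊗ₖ U) * (1 ⊗ₖ U) = 1 := by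
    intro U hU; rw [← mul_kronecker_mul, hU, one_mul, one_kronecker_one]
  have comm : ∀ (R : Matrix (Fin nx) (Fin nx) ℂ) (U : Matrix (Fin ny) (Fin ny) ℂ),
      (R ⊗ₖ (1 : Matrix (Fin ny) (Fin ny) ℂ)) * ((1 : Matrix (Fin nx) (Fin nx) ℂ) ⊗ₖ U)
        = (1 ⊗ₖ U) * (R ⊗ₖ 1) := by
    intro R U; rw [← mul_kronecker_mul, ← mul_kronecker_mul]; simp
  have prodRU : ∀ (R : Matrix (Fin nx) (Fin nx) ℂ) (U : Matrix (Fin ny) (Fin ny) ℂ),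
      (R ⊗ₖ (1 : Matrix (Fin ny) (Fin ny) ℂ)) * ((1 : Matrix (Fin nx) (Fin nx) ℂ) ⊗ₖ U)
        = R ⊗ₖ U := by
    intro R U; rw [← mul_kronecker_mul]; simp
  have cons : ∀ (R : Matrix (Fin nx) (Fin nx) ℂ) (U : Matrix (Fin ny) (Fin ny) ℂ),
      EpsConsistent ρ R U ε →
      1 - 2*ε ≤ (((R ⊗ₖ (1 : Matrix (Fin ny) (Fin ny) ℂ))
        * ((1 : Matrix (Fin nx) (Fin nx) ℂ) ⊗ₖ U) * ρ).trace).re := by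
    intro R U hC
    rw [prodRU]
    unfold EpsConsistent at hC
    linarith
  have hcomm' : a' * b' = b' * a' := by
    rw [ha', hb', ← mul_kronecker_mul, ← mul_kronecker_mul, hS, one_mul]
  have habab : (R1 * R2 * R1 * R2) ⊗ₖ (1 : Matrix (Fin ny) (Fin ny) ℂ)
      = a * b * a * b := by
    rw [ha, hb, ← mul_kronecker_mul, ← mul_kronecker_mul, ← mul_kronecker_mul]
    simp
  rw [habab]
  exact abstract_bound ρ hρ hTr ε hε a b a' b' u v
    (herm R1 hR1h) (herm R2 hR2h) (herm S1 hS1h) (herm S2 hS2h)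
    (hermY U1 hU1h) (hermY U2 hU2h)
    (sqX R1 hR1sq) (sqX R2 hR2sq) (sqX S1 hS1sq) (sqX S2 hS2sq)
    (sqY U1 hU1sq) (sqY U2 hU2sq)
    (comm R1 U1) (comm R1 U2) (comm R2 U1) (comm R2 U2)
    (comm S1 U1) (comm S1 U2) (comm S2 U1) (comm S2 U2)
    hcomm'
    (cons R1 U1 hc1) (cons S1 U1 hc2) (cons R2 U2 hc3) (cons S2 U2 hc4)
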